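/- Let X be a Polish space and let G be a Polish group acting on X continuously and topologically transitively (some orbit is dense). Then the following are equivalent: (1) there exists x ∈ X whose orbit G·x is comeagre in X; (2) for every open neighbourhood V of the identity of G and every nonempty open subset U of X, there exists a nonempty open subset U' ⊆ U such that for all nonempty open subsets W₁, W₂ ⊆ U', one has (V·W₁) ∩ W₂ ≠ ∅. -/

import Mathlib

open Pointwise Set Filter Topology MulAction TopologicalSpace

section RosendalAux

variable {G X : Type*} [Group G] [TopologicalSpace G] [IsTopologicalGroup G]
    [PolishSpace G] [TopologicalSpace X] [PolishSpace X]
    [MulAction G X] [ContinuousSMul G X]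

private lemma rosendal_isMeagre_smul (g : G) {s : Set X} (hs : IsMeagre s) :
    IsMeagre (g • s) := by
  rw [isMeagre_iff_countable_union_isNowhereDense] at hs ⊢
  obtain ⟨S, hnwd, hc, hsub⟩ := hs
  refine ⟨(fun t => g • t) '' S, ?_, hc.image _, ?_⟩
  · rintro t ⟨u, hu, rfl⟩
    have h1 := hnwd u hu
    rw [IsNowhereDense] at h1 ⊢
    rw [closure_smul, interior_smul, h1, smul_set_empty]
  · rintro z ⟨w, hw, rfl⟩
    obtain ⟨t, ht, hwt⟩ := hsub hw
    exact ⟨g • t, ⟨t, ht, rfl⟩, smul_mem_smul_set hwt⟩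

/-- Forward direction of Rosendal's criterion. -/
private lemma rosendal_forward
    (x : X) (hx : orbit G x ∈ residual X)
    (V : Set G) (hVopen : IsOpen V) (hV1 : (1 : G) ∈ V)
    (U : Set X) (hUopen : IsOpen U) (hUne : U.Nonempty) :
    ∃ U' : Set X, U' ⊆ U ∧ IsOpen U' ∧ U'.Nonempty ∧
      ∀ W₁ W₂ : Set X, IsOpen W₁ → IsOpen W₂ → W₁.Nonempty → W₂.Nonempty →
        W₁ ⊆ U' → W₂ ⊆ U' → (V • W₁ ∩ W₂).Nonempty := by
  have hXne : Nonempty X := ⟨hUne.choose⟩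
  have hGne : Nonempty G := ⟨1⟩
  letI := upgradeIsCompletelyMetrizable X
  -- a small symmetric neighbourhood of 1 whose fourth power is inside V
  obtain ⟨W1, hW1o, hW11, hW1V⟩ := exists_open_nhds_one_mul_subset (hVopen.mem_nhds hV1)
  obtain ⟨W2, hW2o, hW21, hW2W1⟩ := exists_open_nhds_one_mul_subset (hW1o.mem_nhds hW11)
  set V₂ : Set G := W2 ∩ W2⁻¹ with hV₂def
  have hV₂o : IsOpen V₂ := hW2o.inter hW2o.inv
  have hV₂1 : (1 : G) ∈ V₂ := ⟨hW21, by simpa using hW21⟩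
  have hV₂inv : ∀ v ∈ V₂, v⁻¹ ∈ V₂ := fun v hv => ⟨hv.2, by simpa using hv.1⟩
  have h4 : ∀ p ∈ V₂, ∀ q ∈ V₂, ∀ r ∈ V₂, ∀ s ∈ V₂, p * q * r * s ∈ V := by
    intro p hp q hq r hr s hs
    have h1 : p * q ∈ W1 := hW2W1 (mul_mem_mul hp.1 hq.1)
    have h2 : r * s ∈ W1 := hW2W1 (mul_mem_mul hr.1 hs.1)
    have h3 := hW1V (mul_mem_mul h1 h2)
    simpa [mul_assoc] using h3
  -- find a point of the comeagre orbit inside U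
  have hdense : Dense (orbit G x) := dense_of_mem_residual hx
  obtain ⟨y, hyU, hyOrb⟩ := hdense.inter_open_nonempty U hUopen hUne
  obtain ⟨h0, h0y⟩ := mem_orbit_iff.mp hyOrb
  have hyres : orbit G y ∈ residual X := by
    rw [← h0y, orbit_smul]; exact hx
  -- the orbit of y is non-meagre
  have hOrbNM : ¬ IsMeagre (orbit G y) := by
    intro hm
    have h1 : (orbit G y ∩ (orbit G y)ᶜ) ∈ residual X := inter_mem hyres hm
    rw [inter_compl_self] at h1
    exact Set.not_nonempty_empty (dense_of_mem_residual h1).nonempty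
  -- cover the orbit of y by countably many translates of V₂ • {y}
  obtain ⟨u, hu⟩ := TopologicalSpace.exists_dense_seq G
  have hcover : orbit G y ⊆ ⋃ n, u n • (V₂ • ({y} : Set X)) := by
    rintro z ⟨g, rfl⟩
    have hgo : IsOpen (g • V₂) := hV₂o.smul g
    obtain ⟨n, hn⟩ := hu.exists_mem_open hgo (Set.Nonempty.smul_set ⟨1, hV₂1⟩)
    obtain ⟨v, hv, hgv⟩ := hn
    have hg : g = u n * v⁻¹ := by
      have : g * v = u n := hgv
      rw [← this, mul_assoc, mul_inv_cancel, mul_one]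
    refine mem_iUnion.mpr ⟨n, ⟨v⁻¹ • y, ⟨v⁻¹, hV₂inv v hv, y, rfl, rfl⟩, ?_⟩⟩
    show u n • v⁻¹ • y = g • y
    rw [smul_smul, ← hg]
  -- hence V₂ • {y} is non-meagre, so it is somewhere dense
  have hsomeNM : ∃ n, ¬ IsMeagre (u n • (V₂ • ({y} : Set X))) := by
    by_contra hall
    push_neg at hall
    exact hOrbNM (IsMeagre.mono hcover (isMeagre_iUnion hall))
  obtain ⟨n, hn⟩ := hsomeNM
  have hNM : ¬ IsMeagre (V₂ • ({y} : Set X)) := fun hm => hn (rosendal_isMeagre_smul (u n) hm)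
  have hint : (interior (closure (V₂ • ({y} : Set X)))).Nonempty := by
    rw [Set.nonempty_iff_ne_empty]
    intro h
    apply hNM
    rw [isMeagre_iff_countable_union_isNowhereDense]
    refine ⟨{closure (V₂ • ({y} : Set X))}, ?_, countable_singleton _, ?_⟩
    · rintro t rfl
      rwa [IsNowhereDense, closure_closure]
    · exact subset_trans subset_closure (by rw [sUnion_singleton])
  set D₀ := interior (closure (V₂ • ({y} : Set X))) with hD₀
  obtain ⟨z, hz⟩ := hint
  have hzc : z ∈ closure (V₂ • ({y} : Set X)) := interior_subset hz
  obtain ⟨w, hwD, hwmem⟩ := mem_closure_iff.mp hzc D₀ isOpen_interior hz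
  obtain ⟨v, hv, y', hy', hvy⟩ := hwmem
  rw [mem_singleton_iff] at hy'
  have hvy' : v • y = w := by rw [← hy']; exact hvy
  -- the good set U'
  refine ⟨(v⁻¹ • D₀) ∩ U, inter_subset_right,
    (isOpen_interior.smul v⁻¹).inter hUopen, ⟨y, ?_, hyU⟩, ?_⟩
  · have h5 : v⁻¹ • w ∈ v⁻¹ • D₀ := smul_mem_smul_set hwD
    rwa [← hvy', inv_smul_smul] at h5
  · intro W₁ W₂ hW₁o hW₂o hW₁ne hW₂ne hW₁sub hW₂sub
    have hcl : v⁻¹ • D₀ ⊆ closure (v⁻¹ • (V₂ • ({y} : Set X))) := by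
      rw [closure_smul]
      exact smul_set_mono interior_subset
    have hget : ∀ W : Set X, IsOpen W → W.Nonempty → W ⊆ (v⁻¹ • D₀) ∩ U →
        ∃ a ∈ V₂, (v⁻¹ * a) • y ∈ W := by
      intro W hWo hWne hWsub
      obtain ⟨p, hp⟩ := hWne
      have hpcl : p ∈ closure (v⁻¹ • (V₂ • ({y} : Set X))) := hcl (hWsub hp).1
      obtain ⟨q, hqW, hqmem⟩ := mem_closure_iff.mp hpcl W hWo hp
      obtain ⟨q', hq', hq'eq⟩ := hqmem
      obtain ⟨a, ha, y'', hy'', hay⟩ := hq'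
      rw [mem_singleton_iff] at hy''
      refine ⟨a, ha, ?_⟩
      have hay' : a • y = q' := by rw [← hy'']; exact hay
      have hq'eq' : v⁻¹ • q' = q := hq'eq
      have : (v⁻¹ * a) • y = q := by rw [mul_smul, hay']; exact hq'eq'
      rwa [this]
    obtain ⟨a, ha, haW₁⟩ := hget W₁ hW₁o hW₁ne hW₁sub
    obtain ⟨b, hb, hbW₂⟩ := hget W₂ hW₂o hW₂ne hW₂sub
    refine ⟨(v⁻¹ * b) • y, ⟨?_, hbW₂⟩⟩
    refine ⟨v⁻¹ * b * a⁻¹ * v, h4 v⁻¹ (hV₂inv v hv) b hb a⁻¹ (hV₂inv a ha) v hv,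
      (v⁻¹ * a) • y, haW₁, ?_⟩
    have hgg : (v⁻¹ * b * a⁻¹ * v) * (v⁻¹ * a) = v⁻¹ * b := by group
    show (v⁻¹ * b * a⁻¹ * v) • ((v⁻¹ * a) • y) = (v⁻¹ * b) • y
    rw [smul_smul, hgg]

/-- Backward direction of Rosendal's criterion. -/
private lemma rosendal_backward
    (htrans : ∃ x : X, Dense (orbit G x))
    (hcond : ∀ V : Set G, IsOpen V → (1 : G) ∈ V →
      ∀ U : Set X, IsOpen U → U.Nonempty →
        ∃ U' : Set X, U' ⊆ U ∧ IsOpen U' ∧ U'.Nonempty ∧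
          ∀ W₁ W₂ : Set X, IsOpen W₁ → IsOpen W₂ → W₁.Nonempty → W₂.Nonempty →
            W₁ ⊆ U' → W₂ ⊆ U' → (V • W₁ ∩ W₂).Nonempty) :
    ∃ x : X, orbit G x ∈ residual X := by
  classical
  obtain ⟨x₀, hx₀⟩ := htrans
  have hXne : Nonempty X := ⟨x₀⟩
  letI := upgradeIsCompletelyMetrizable X
  letI := upgradeIsCompletelyMetrizable G
  -- countable basis of X consisting of nonempty sets
  set ℬ : Set (Set X) := {b | b ∈ countableBasis X ∧ b.Nonempty} with hℬdef
  have hℬc : ℬ.Countable := (countable_countableBasis X).mono (fun b hb => hb.1)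
  have hℬopen : ∀ b ∈ ℬ, IsOpen b := fun b hb => isOpen_of_mem_countableBasis hb.1
  have hℬsub : ∀ (U : Set X), IsOpen U → U.Nonempty → ∃ b ∈ ℬ, b ⊆ U ∧ b.Nonempty := by
    rintro U hU ⟨p, hp⟩
    obtain ⟨b, hb, hpb, hbU⟩ := (isBasis_countableBasis X).exists_subset_of_mem_open hp hU
    exact ⟨b, ⟨hb, ⟨p, hpb⟩⟩, hbU, ⟨p, hpb⟩⟩
  -- countable basis of neighbourhoods of 1 in G
  obtain ⟨Vb, hVb⟩ := (𝓝 (1 : G)).exists_antitone_basis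
  set Vo : ℕ → Set G := fun n => interior (Vb n) with hVodef
  have hVo_open : ∀ n, IsOpen (Vo n) := fun n => isOpen_interior
  have hVo_one : ∀ n, (1 : G) ∈ Vo n := fun n =>
    mem_interior_iff_mem_nhds.mpr (hVb.toHasBasis.mem_of_mem trivial)
  have hVo_basis : ∀ W : Set G, W ∈ 𝓝 (1 : G) → ∃ n, Vo n ⊆ W := by
    intro W hW
    obtain ⟨n, -, hn⟩ := hVb.toHasBasis.mem_iff.mp hW
    exact ⟨n, interior_subset.trans hn⟩
  -- the three families of residual sets
  set T : Set X := ⋂ b ∈ ℬ, {z : X | ∃ g : G, g • z ∈ b} with hTdef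
  set O : Set X := ⋂ n : ℕ, {z : X | ∃ U' : Set X, IsOpen U' ∧ z ∈ U' ∧
      ∀ W₁ W₂ : Set X, IsOpen W₁ → IsOpen W₂ → W₁.Nonempty → W₂.Nonempty →
        W₁ ⊆ U' → W₂ ⊆ U' → ((Vo n) • W₁ ∩ W₂).Nonempty} with hOdef
  set Z : ℕ → Set X → Set X := fun n b => {z : X | ∃ v ∈ Vo n, v • z ∈ b} with hZdef
  set ZZ : Set X := ⋂ n : ℕ, ⋂ b ∈ ℬ, (Z n b ∪ (closure (Z n b))ᶜ) with hZZdef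
  have hZopen : ∀ (n : ℕ) (b : Set X), b ∈ ℬ → IsOpen (Z n b) := by
    intro n b hb
    have : Z n b = ⋃ v ∈ Vo n, (fun z : X => v • z) ⁻¹' b := by
      ext z; simp [hZdef, mem_iUnion]
    rw [this]
    exact isOpen_biUnion fun v _ => (hℬopen b hb).preimage (continuous_const.smul continuous_id)
  have hTres : T ∈ residual X := by
    rw [hTdef]
    refine (countable_bInter_mem hℬc).mpr (fun b hb => ?_)
    have hopen : IsOpen {z : X | ∃ g : G, g • z ∈ b} := by
      have : {z : X | ∃ g : G, g • z ∈ b} = ⋃ g : G, (fun z : X => g • z) ⁻¹' b := by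
        ext z; simp [mem_iUnion]
      rw [this]
      exact isOpen_iUnion fun g => (hℬopen b hb).preimage (continuous_const.smul continuous_id)
    refine residual_of_dense_open hopen (Dense.mono ?_ hx₀)
    rintro z ⟨g, rfl⟩
    have hdz : Dense (orbit G (g • x₀)) := by rw [orbit_smul]; exact hx₀
    obtain ⟨w, hwb, hwOrb⟩ := hdz.inter_open_nonempty b (hℬopen b hb) hb.2
    obtain ⟨g', rfl⟩ := mem_orbit_iff.mp hwOrb
    exact ⟨g', hwb⟩
  have hOres : O ∈ residual X := by
    rw [hOdef]
    refine countable_iInter_mem.mpr (fun n => ?_)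
    apply residual_of_dense_open
    · rw [isOpen_iff_forall_mem_open]
      rintro z ⟨U', hU'o, hzU', hgd⟩
      exact ⟨U', fun w hw => ⟨U', hU'o, hw, hgd⟩, hU'o, hzU'⟩
    · rw [dense_iff_inter_open]
      intro U hUo hUne
      obtain ⟨U', hsub, hU'o, hU'ne, hgd⟩ := hcond (Vo n) (hVo_open n) (hVo_one n) U hUo hUne
      obtain ⟨p, hp⟩ := hU'ne
      exact ⟨p, hsub hp, ⟨U', hU'o, hp, hgd⟩⟩
  have hZZres : ZZ ∈ residual X := by
    rw [hZZdef]
    refine countable_iInter_mem.mpr (fun n => ?_)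
    refine (countable_bInter_mem hℬc).mpr (fun b hb => ?_)
    apply residual_of_dense_open
    · exact (hZopen n b hb).union (isClosed_closure.isOpen_compl)
    · rw [dense_iff_inter_open]
      intro U hUo hUne
      by_cases hcase : (U ∩ Z n b).Nonempty
      · obtain ⟨p, hp1, hp2⟩ := hcase
        exact ⟨p, hp1, Or.inl hp2⟩
      · rw [Set.not_nonempty_iff_eq_empty] at hcase
        obtain ⟨p, hp⟩ := hUne
        refine ⟨p, hp, Or.inr (fun hpc => ?_)⟩
        obtain ⟨q, hqU, hqZ⟩ := mem_closure_iff.mp hpc U hUo hp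
        exact absurd hcase (Set.Nonempty.ne_empty ⟨q, hqU, hqZ⟩)
  -- the generic set
  set C : Set X := T ∩ O ∩ ZZ with hCdef
  have hCres : C ∈ residual X := inter_mem (inter_mem hTres hOres) hZZres
  -- exact point-moving for points of C
  have key1 : ∀ z ∈ C, ∀ n : ℕ, ∃ U' : Set X, IsOpen U' ∧ z ∈ U' ∧
      ∀ B : Set X, B ⊆ U' → IsOpen B → B.Nonempty → ∃ v ∈ Vo n, v • z ∈ B := by
    intro z hz n
    have hzO : z ∈ O := hz.1.2
    rw [hOdef] at hzO
    obtain ⟨U', hU'o, hzU', hgd⟩ := mem_iInter.mp hzO n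
    refine ⟨U', hU'o, hzU', ?_⟩
    intro B hBU' hBo hBne
    obtain ⟨b, hb, hbB, hbne⟩ := hℬsub B hBo hBne
    have hzcl : z ∈ closure (Z n b) := by
      rw [mem_closure_iff]
      intro W hWo hzW
      have hgd2 := hgd (W ∩ U') b (hWo.inter hU'o) (hℬopen b hb) ⟨z, hzW, hzU'⟩ hbne
        inter_subset_right (hbB.trans hBU')
      obtain ⟨p, hpV, hpb⟩ := hgd2
      obtain ⟨v, hv, w, hw, rfl⟩ := hpV
      exact ⟨w, hw.1, v, hv, hpb⟩
    have hzZZ : z ∈ ZZ := hz.2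
    rw [hZZdef] at hzZZ
    have hzG := mem_iInter₂.mp (mem_iInter.mp hzZZ n) b hb
    rcases hzG with h | h
    · obtain ⟨v, hv, hvb⟩ := h
      exact ⟨v, hv, hbB hvb⟩
    · exact absurd hzcl h
  -- point-moving along the whole orbit, with metric control on the group element
  have key2 : ∀ z ∈ C, ∀ (g : G) (ε : ℝ), 0 < ε → ∃ N : Set X, IsOpen N ∧ g • z ∈ N ∧
      ∀ B : Set X, B ⊆ N → IsOpen B → B.Nonempty →
        ∃ g' : G, dist g' g < ε ∧ g' • z ∈ B := by
    intro z hz g ε hε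
    have hKopen : IsOpen {v : G | dist (g * v) g < ε} :=
      isOpen_lt ((continuous_const.mul continuous_id).dist continuous_const) continuous_const
    have hK1 : (1 : G) ∈ {v : G | dist (g * v) g < ε} := by
      simp [hε]
    obtain ⟨n, hnK⟩ := hVo_basis _ (hKopen.mem_nhds hK1)
    obtain ⟨U', hU'o, hzU', hdens⟩ := key1 z hz n
    refine ⟨g • U', hU'o.smul g, smul_mem_smul_set hzU', ?_⟩
    intro B hBN hBo hBne
    have hBsub : g⁻¹ • B ⊆ U' := by
      rintro p ⟨q, hqB, rfl⟩
      obtain ⟨w, hwU', hw⟩ := hBN hqB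
      have hw' : g • w = q := hw
      show g⁻¹ • q ∈ U'
      rw [← hw', inv_smul_smul]
      exact hwU'
    obtain ⟨v, hv, hvz⟩ := hdens (g⁻¹ • B) hBsub (hBo.smul g⁻¹) (hBne.smul_set)
    obtain ⟨q, hqB, hq⟩ := hvz
    have hq' : g⁻¹ • q = v • z := hq
    have hgvz : (g * v) • z = q := by
      rw [mul_smul, ← hq', smul_smul, mul_inv_cancel, one_smul]
    exact ⟨g * v, hnK hv, by rw [hgvz]; exact hqB⟩
  -- choose the generic point x
  obtain ⟨x, hxC⟩ := (dense_of_mem_residual hCres).nonempty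
  refine ⟨x, mem_of_superset hCres ?_⟩
  intro y hyC
  -- The fusion construction: show y ∈ orbit G x.
  -- step existence
  have hstep : ∀ (n : ℕ) (p : G × G × Set X),
      (IsOpen p.2.2 ∧ p.1 • x ∈ p.2.2 ∧ p.2.1 • y ∈ p.2.2 ∧
        ∀ B : Set X, B ⊆ p.2.2 → IsOpen B → B.Nonempty →
          ∃ h' : G, dist h' p.2.1 < (1/2 : ℝ)^n ∧ h' • y ∈ B) →
      ∃ q : G × G × Set X,
        (IsOpen q.2.2 ∧ q.1 • x ∈ q.2.2 ∧ q.2.1 • y ∈ q.2.2 ∧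
          ∀ B : Set X, B ⊆ q.2.2 → IsOpen B → B.Nonempty →
            ∃ h' : G, dist h' q.2.1 < (1/2 : ℝ)^(n+1) ∧ h' • y ∈ B) ∧
        dist q.1 p.1 ≤ (1/2 : ℝ)^n ∧ dist q.2.1 p.2.1 ≤ (1/2 : ℝ)^n ∧
        dist (q.1 • x) (q.2.1 • y) ≤ (1/2 : ℝ)^n := by
    rintro n ⟨g, h, P⟩ ⟨hPo, hgx, hhy, hPdens⟩
    obtain ⟨N, hNo, hgxN, hNdens⟩ := key2 x hxC g ((1/2 : ℝ)^n) (by positivity)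
    have hM : IsOpen (N ∩ P) := hNo.inter hPo
    obtain ⟨r₁, hr₁pos, hr₁sub⟩ := Metric.isOpen_iff.mp hM (g • x) ⟨hgxN, hgx⟩
    obtain ⟨h', hh'd, hh'y⟩ := hPdens (Metric.ball (g • x) r₁)
      (fun p hp => (hr₁sub hp).2) Metric.isOpen_ball ⟨g • x, Metric.mem_ball_self hr₁pos⟩
    obtain ⟨N', hN'o, hh'yN', hN'dens⟩ := key2 y hyC h' ((1/2 : ℝ)^(n+1)) (by positivity)
    have hM2 : IsOpen (N' ∩ Metric.ball (g • x) r₁) := hN'o.inter Metric.isOpen_ball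
    obtain ⟨r₂, hr₂pos, hr₂sub⟩ := Metric.isOpen_iff.mp hM2 (h' • y) ⟨hh'yN', hh'y⟩
    set r₃ : ℝ := min r₂ ((1/2 : ℝ)^n) with hr₃def
    have hr₃pos : 0 < r₃ := lt_min hr₂pos (by positivity)
    have hball₃ : Metric.ball (h' • y) r₃ ⊆ N' ∩ Metric.ball (g • x) r₁ :=
      (Metric.ball_subset_ball (min_le_left _ _)).trans hr₂sub
    obtain ⟨g', hg'd, hg'x⟩ := hNdens (Metric.ball (h' • y) r₃)
      (fun p hp => (hr₁sub ((hball₃ hp).2)).1) Metric.isOpen_ball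
      ⟨h' • y, Metric.mem_ball_self hr₃pos⟩
    refine ⟨(g', h', Metric.ball (h' • y) r₃ ∩ N'), ⟨?_, ?_, ?_, ?_⟩, ?_, ?_, ?_⟩
    · exact Metric.isOpen_ball.inter hN'o
    · exact ⟨hg'x, (hball₃ hg'x).1⟩
    · exact ⟨Metric.mem_ball_self hr₃pos, hh'yN'⟩
    · intro B hB hBo hBne
      exact hN'dens B (hB.trans (inter_subset_right)) hBo hBne
    · exact le_of_lt hg'd
    · exact le_of_lt hh'd
    · have := Metric.mem_ball.mp hg'x
      rw [dist_comm] at this ⊢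
      exact le_of_lt (lt_of_lt_of_le this (min_le_right _ _))
  -- base state
  obtain ⟨N₀, hN₀o, hyN₀, hN₀dens⟩ := key2 y hyC 1 ((1/2 : ℝ)^0) (by norm_num)
  have hN₀ne : N₀.Nonempty := ⟨(1 : G) • y, hyN₀⟩
  obtain ⟨b₀, hb₀ℬ, hb₀N₀, hb₀ne⟩ := hℬsub N₀ hN₀o hN₀ne
  have hxT : x ∈ T := hxC.1.1
  rw [hTdef] at hxT
  obtain ⟨g₀, hg₀⟩ := mem_iInter₂.mp hxT b₀ hb₀ℬ
  -- build the sequence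
  choose! step hstepspec using hstep
  set p₀ : G × G × Set X := (g₀, 1, N₀) with hp₀def
  set seq : ℕ → G × G × Set X := fun n => Nat.rec p₀ (fun k ih => step k ih) n with hseqdef
  have hseqS : ∀ n, seq (n+1) = step n (seq n) := fun n => rfl
  have hInv : ∀ n, IsOpen (seq n).2.2 ∧ (seq n).1 • x ∈ (seq n).2.2 ∧
      (seq n).2.1 • y ∈ (seq n).2.2 ∧
      ∀ B : Set X, B ⊆ (seq n).2.2 → IsOpen B → B.Nonempty →
        ∃ h' : G, dist h' (seq n).2.1 < (1/2 : ℝ)^n ∧ h' • y ∈ B := by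
    intro n
    induction n with
    | zero => exact ⟨hN₀o, hb₀N₀ hg₀, hyN₀, hN₀dens⟩
    | succ k ih => exact (hstepspec k (seq k) ih).1
  have hbound : ∀ n, dist ((seq (n+1)).1) ((seq n).1) ≤ (1/2 : ℝ)^n ∧
      dist ((seq (n+1)).2.1) ((seq n).2.1) ≤ (1/2 : ℝ)^n ∧
      dist ((seq (n+1)).1 • x) ((seq (n+1)).2.1 • y) ≤ (1/2 : ℝ)^n := by
    intro n
    exact (hstepspec n (seq n) (hInv n)).2
  have hhalf : ∀ n : ℕ, ((1:ℝ)/2)^n = 2/2/2^n := by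
    intro n
    rw [div_pow, one_pow]
    norm_num
  have hCg : CauchySeq (fun n => (seq n).1) := by
    apply cauchySeq_of_le_geometric_two (C := 2)
    intro n
    rw [← hhalf n, dist_comm]
    exact (hbound n).1
  have hCh : CauchySeq (fun n => (seq n).2.1) := by
    apply cauchySeq_of_le_geometric_two (C := 2)
    intro n
    rw [← hhalf n, dist_comm]
    exact (hbound n).2.1
  obtain ⟨a, ha⟩ := cauchySeq_tendsto_of_complete hCg
  obtain ⟨b, hb⟩ := cauchySeq_tendsto_of_complete hCh
  have hax : Tendsto (fun n => (seq n).1 • x) atTop (𝓝 (a • x)) := ha.smul tendsto_const_nhds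
  have hby : Tendsto (fun n => (seq n).2.1 • y) atTop (𝓝 (b • y)) := hb.smul tendsto_const_nhds
  have hdist : Tendsto (fun n => dist ((seq n).1 • x) ((seq n).2.1 • y)) atTop
      (𝓝 (dist (a • x) (b • y))) := hax.dist hby
  have hdist' : Tendsto (fun n => dist ((seq (n+1)).1 • x) ((seq (n+1)).2.1 • y)) atTop
      (𝓝 (dist (a • x) (b • y))) := hdist.comp (tendsto_add_atTop_nat 1)
  have hzero : Tendsto (fun n => dist ((seq (n+1)).1 • x) ((seq (n+1)).2.1 • y)) atTop
      (𝓝 0) := by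
    apply squeeze_zero (fun n => dist_nonneg) (fun n => (hbound n).2.2)
    exact tendsto_pow_atTop_nhds_zero_of_lt_one (by norm_num) (by norm_num)
  have heq : dist (a • x) (b • y) = 0 := tendsto_nhds_unique hdist' hzero
  have heq2 : a • x = b • y := by rwa [dist_eq_zero] at heq
  refine mem_orbit_iff.mpr ⟨b⁻¹ * a, ?_⟩
  rw [mul_smul, heq2, inv_smul_smul]

end RosendalAux

/-- **Rosendal's criterion for a comeagre orbit.**
Let `X` be a Polish space and `G` a Polish group acting on `X` continuously and topologically
transitively (some orbit is dense). Then there is a comeagre `G`-orbit if and only if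
for every open neighbourhood `V` of `1 ∈ G` and every nonempty open `U ⊆ X` there is a
nonempty open `U' ⊆ U` such that for all nonempty open `W₁, W₂ ⊆ U'` one has
`(V • W₁) ∩ W₂ ≠ ∅`. -/
theorem comeagre_orbit_iff {G X : Type*} [Group G] [TopologicalSpace G] [IsTopologicalGroup G]
    [PolishSpace G] [TopologicalSpace X] [PolishSpace X]
    [MulAction G X] [ContinuousSMul G X]
    (htrans : ∃ x : X, Dense (MulAction.orbit G x)) :
    (∃ x : X, MulAction.orbit G x ∈ residual X) ↔
      ∀ V : Set G, IsOpen V → (1 : G) ∈ V →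
        ∀ U : Set X, IsOpen U → U.Nonempty →
          ∃ U' : Set X, U' ⊆ U ∧ IsOpen U' ∧ U'.Nonempty ∧
            ∀ W₁ W₂ : Set X, IsOpen W₁ → IsOpen W₂ → W₁.Nonempty → W₂.Nonempty →
              W₁ ⊆ U' → W₂ ⊆ U' → (V • W₁ ∩ W₂).Nonempty := by
  constructor
  · rintro ⟨x, hx⟩ V hVo hV1 U hUo hUne
    exact rosendal_forward x hx V hVo hV1 U hUo hUne
  · intro hcond
    exact rosendal_backward htrans hcond
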